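/- On a probability space, in the multilayer e-filter setting with null structure, suppose the e_g^(m) are nonnegative real random variables such that for every m ∈ [M], Σ_{g∈H0^(m)} E[e_g^(m)] ≤ G^(m) (i.e., the layer-m e-values form a set of relaxed e-values). Let S be the output of the generalized e-filter at levels α^(1),…,α^(M) ∈ (0,1). Then for every m ∈ [M], FDR^(m) ≤ α^(m). -/

import Mathlib

open scoped ENNReal
open Filter MeasureTheory

namespace MultilayerEFilter

variable {N M : ℕ} {G : Fin M → ℕ}

/-- Candidate selection set `S(t) = {j : e_{h(m,j)}^(m) ≥ t^(m) for all m}`. -/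
noncomputable def sel (h : (m : Fin M) → Fin N → Fin (G m))
    (e : (m : Fin M) → Fin (G m) → ℝ≥0∞) (t : Fin M → ℝ≥0∞) : Finset (Fin N) :=
  Finset.univ.filter fun j => ∀ m, t m ≤ e m (h m j)

/-- Induced group selection `S^(m) = {g : A_g^(m) ∩ S ≠ ∅}`. -/
noncomputable def selGrp (A : (m : Fin M) → Fin (G m) → Finset (Fin N))
    (S : Finset (Fin N)) (m : Fin M) : Finset (Fin (G m)) :=
  Finset.univ.filter fun g => ∃ j ∈ A m g, j ∈ S

/-- Estimated FDP at layer `m`: `(G^(m)/t^(m)) / (|S^(m)(t)| ∨ 1)` (with `G/∞ = 0`). -/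
noncomputable def FDPhat (A : (m : Fin M) → Fin (G m) → Finset (Fin N))
    (h : (m : Fin M) → Fin N → Fin (G m))
    (e : (m : Fin M) → Fin (G m) → ℝ≥0∞) (t : Fin M → ℝ≥0∞) (m : Fin M) : ℝ≥0∞ :=
  ((G m : ℝ≥0∞) / t m) / ((max (selGrp A (sel h e t) m).card 1 : ℕ) : ℝ≥0∞)

/-- Admissible threshold vectors. -/
noncomputable def admissible (A : (m : Fin M) → Fin (G m) → Finset (Fin N))
    (h : (m : Fin M) → Fin N → Fin (G m))
    (e : (m : Fin M) → Fin (G m) → ℝ≥0∞) (α : Fin M → ℝ) : Set (Fin M → ℝ≥0∞) :=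
  {t | (∀ m, 1 ≤ t m) ∧ ∀ m, FDPhat A h e t m ≤ ENNReal.ofReal (α m)}

/-- Threshold of the generalized e-filter: coordinatewise minimum over admissible vectors. -/
noncomputable def filterThreshold (A : (m : Fin M) → Fin (G m) → Finset (Fin N))
    (h : (m : Fin M) → Fin N → Fin (G m))
    (e : (m : Fin M) → Fin (G m) → ℝ≥0∞) (α : Fin M → ℝ) (m : Fin M) : ℝ≥0∞ :=
  sInf {s | ∃ t ∈ admissible A h e α, t m = s}

/-- Output of the generalized e-filter. -/
noncomputable def output (A : (m : Fin M) → Fin (G m) → Finset (Fin N))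
    (h : (m : Fin M) → Fin N → Fin (G m))
    (e : (m : Fin M) → Fin (G m) → ℝ≥0∞) (α : Fin M → ℝ) : Finset (Fin N) :=
  sel h e (filterThreshold A h e α)

/-- Null groups at layer `m`: groups entirely contained in the null feature set. -/
def nullGrp (A : (m : Fin M) → Fin (G m) → Finset (Fin N))
    (H0 : Finset (Fin N)) (m : Fin M) : Finset (Fin (G m)) :=
  Finset.univ.filter fun g => A m g ⊆ H0

/-- Layer-`m` false discovery proportion of a selected feature set. -/
noncomputable def FDP (A : (m : Fin M) → Fin (G m) → Finset (Fin N))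
    (H0 : Finset (Fin N)) (S : Finset (Fin N)) (m : Fin M) : ℝ≥0∞ :=
  ((selGrp A S m ∩ nullGrp A H0 m).card : ℝ≥0∞) /
    ((max (selGrp A S m).card 1 : ℕ) : ℝ≥0∞)

end MultilayerEFilter

namespace MultilayerEFilter

/-!
STATEMENT 7 (second bullet of Lemma 2.7).

If the layer-`m` e-values form a set of relaxed e-values
(`Σ_{g∈H0^(m)} E[e_g^(m)] ≤ G^(m)` for every `m`), then the output of the
generalized e-filter at levels `α^(1),…,α^(M) ∈ (0,1)` satisfies
`FDR^(m) ≤ α^(m)` for every `m`.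
-/


private lemma mem_sel_iff {N M : ℕ} {G : Fin M → ℕ} (h : (m : Fin M) → Fin N → Fin (G m))
    (e : (m : Fin M) → Fin (G m) → ℝ≥0∞) (t : Fin M → ℝ≥0∞) (j : Fin N) :
    j ∈ sel h e t ↔ ∀ m, t m ≤ e m (h m j) := by
  simp only [sel, Finset.mem_filter, Finset.mem_univ, true_and]

private lemma mem_selGrp_iff {N M : ℕ} {G : Fin M → ℕ}
    (A : (m : Fin M) → Fin (G m) → Finset (Fin N)) (S : Finset (Fin N)) (m : Fin M)
    (g : Fin (G m)) : g ∈ selGrp A S m ↔ ∃ j ∈ A m g, j ∈ S := by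
  simp only [selGrp, Finset.mem_filter, Finset.mem_univ, true_and]

theorem stmt7 {N M : ℕ} (hN : 1 ≤ N) (hM : 1 ≤ M) {G : Fin M → ℕ}
    (A : (m : Fin M) → Fin (G m) → Finset (Fin N))
    (h : (m : Fin M) → Fin N → Fin (G m))
    (hne : ∀ m g, (A m g).Nonempty)
    (hdisj : ∀ m, ∀ g₁ g₂ : Fin (G m), g₁ ≠ g₂ → Disjoint (A m g₁) (A m g₂))
    (hmem : ∀ m j, j ∈ A m (h m j))
    (H0 : Finset (Fin N))
    {Ω : Type*} [MeasurableSpace Ω] (P : Measure Ω) [IsProbabilityMeasure P]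
    (e : Ω → (m : Fin M) → Fin (G m) → ℝ≥0∞)
    (hmeas : ∀ m g, Measurable fun ω => e ω m g)
    (hfin : ∀ ω m g, e ω m g ≠ ⊤)
    (hrelax : ∀ m, ∑ g ∈ nullGrp A H0 m, ∫⁻ ω, e ω m g ∂P ≤ (G m : ℝ≥0∞))
    (α : Fin M → ℝ) (hα : ∀ m, α m ∈ Set.Ioo (0 : ℝ) 1) :
    ∀ m, (∫⁻ ω, FDP A H0 (output A h (e ω) α) m ∂P) ≤ ENNReal.ofReal (α m) := by
  intro m
  obtain ⟨hα0, hα1⟩ := hα m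
  set a := ENNReal.ofReal (α m) with ha_def
  have ha0 : a ≠ 0 := (ENNReal.ofReal_pos.2 hα0).ne'
  have haT : a ≠ ∞ := ENNReal.ofReal_ne_top
  have hGpos : 0 < G m := Fin.pos (h m ⟨0, hN⟩)
  have hG0 : ((G m : ℕ) : ℝ≥0∞) ≠ 0 := Nat.cast_ne_zero.2 hGpos.ne'
  have hGT : ((G m : ℕ) : ℝ≥0∞) ≠ ∞ := ENNReal.natCast_ne_top _
  have key : ∀ ω, FDP A H0 (output A h (e ω) α) m ≤
      (a / (G m : ℝ≥0∞)) * ∑ g ∈ nullGrp A H0 m, e ω m g := by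
    intro ω
    set eo := e ω with heo
    set t := filterThreshold A h eo α with htdef
    set S := sel h eo t with hSdef
    set Dn : ℕ := max (selGrp A S m).card 1 with hDn
    set D : ℝ≥0∞ := (Dn : ℝ≥0∞) with hDdef
    have hD0 : D ≠ 0 := by
      have : 1 ≤ Dn := le_max_right _ _
      exact Nat.cast_ne_zero.2 (by omega : Dn ≠ 0)
    have hDT : D ≠ ∞ := ENNReal.natCast_ne_top _
    set E := ∑ g ∈ nullGrp A H0 m, eo m g with hEdef
    have hc0 : a * D ≠ 0 := mul_ne_zero ha0 hD0
    have hcT : a * D ≠ ∞ := ENNReal.mul_ne_top haT hDT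
    -- threshold is below every admissible vector
    have hts : ∀ u ∈ admissible A h eo α, ∀ m', t m' ≤ u m' := by
      intro u hu m'
      exact sInf_le ⟨u, hu, rfl⟩
    -- Step A : G ≤ a * D * t m
    have hA : ((G m : ℕ) : ℝ≥0∞) ≤ a * D * t m := by
      have hle : ((G m : ℕ) : ℝ≥0∞) / (a * D) ≤ t m := by
        apply le_sInf
        rintro s ⟨u, hu, rfl⟩
        have hu0 : u m ≠ 0 := by
          have := hu.1 m; intro h0; rw [h0] at this; exact (not_le.2 zero_lt_one) this
        have hsel : sel h eo u ⊆ S := by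
          intro j hj
          rw [mem_sel_iff] at hj
          rw [hSdef, mem_sel_iff]
          exact fun m' => (hts u hu m').trans (hj m')
        have hgrp : selGrp A (sel h eo u) m ⊆ selGrp A S m := by
          intro g hg
          rw [mem_selGrp_iff] at hg
          obtain ⟨j, hj1, hj2⟩ := hg
          exact (mem_selGrp_iff A S m g).2 ⟨j, hj1, hsel hj2⟩
        set Du : ℕ := max (selGrp A (sel h eo u) m).card 1 with hDu
        have hDu0 : ((Du : ℕ) : ℝ≥0∞) ≠ 0 := by
          have : 1 ≤ Du := le_max_right _ _
          exact Nat.cast_ne_zero.2 (by omega)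
        have hDuT : ((Du : ℕ) : ℝ≥0∞) ≠ ∞ := ENNReal.natCast_ne_top _
        have hDuD : ((Du : ℕ) : ℝ≥0∞) ≤ D := by
          have hle' : Du ≤ Dn :=
            max_le_max (Finset.card_le_card hgrp) le_rfl
          rw [hDdef]
          exact_mod_cast hle'
        have hfd : ((G m : ℕ) : ℝ≥0∞) / u m / ((Du : ℕ) : ℝ≥0∞) ≤ a := hu.2 m
        have h1 : ((G m : ℕ) : ℝ≥0∞) / u m ≤ a * D := by
          have := (ENNReal.div_le_iff_le_mul (Or.inl hDu0) (Or.inl hDuT)).1 hfd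
          calc ((G m : ℕ) : ℝ≥0∞) / u m ≤ a * ((Du : ℕ) : ℝ≥0∞) := this
            _ ≤ a * D := mul_le_mul_right hDuD a
        have h2 : ((G m : ℕ) : ℝ≥0∞) ≤ a * D * u m :=
          (ENNReal.div_le_iff_le_mul (Or.inl hu0) (Or.inr hc0)).1 h1
        have h2' : ((G m : ℕ) : ℝ≥0∞) ≤ u m * (a * D) := by rwa [mul_comm] at h2
        exact (ENNReal.div_le_iff_le_mul (Or.inl hc0) (Or.inl hcT)).2 h2'
      have := (ENNReal.div_le_iff_le_mul (Or.inl hc0) (Or.inl hcT)).1 hle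
      rwa [mul_comm] at this
    -- Step B : t m * K ≤ E
    set K : ℕ := (selGrp A S m ∩ nullGrp A H0 m).card with hK
    have hB : (K : ℝ≥0∞) * t m ≤ E := by
      have hpt : ∀ g ∈ selGrp A S m ∩ nullGrp A H0 m, t m ≤ eo m g := by
        intro g hg
        have hg1 := Finset.mem_of_mem_inter_left hg
        rw [mem_selGrp_iff] at hg1
        obtain ⟨j, hjA, hjS⟩ := hg1
        have hhj : h m j = g := by
          by_contra hne'
          exact (Finset.disjoint_left.1 (hdisj m _ _ hne')) (hmem m j) hjA
        rw [hSdef, mem_sel_iff] at hjS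
        have := hjS m
        rwa [hhj] at this
      calc (K : ℝ≥0∞) * t m = ∑ _g ∈ selGrp A S m ∩ nullGrp A H0 m, t m := by
            rw [Finset.sum_const, nsmul_eq_mul]
        _ ≤ ∑ g ∈ selGrp A S m ∩ nullGrp A H0 m, eo m g := Finset.sum_le_sum hpt
        _ ≤ E := Finset.sum_le_sum_of_subset Finset.inter_subset_right
    -- combine
    have hKG : (K : ℝ≥0∞) * ((G m : ℕ) : ℝ≥0∞) ≤ a * E * D := by
      calc (K : ℝ≥0∞) * ((G m : ℕ) : ℝ≥0∞) ≤ (K : ℝ≥0∞) * (a * D * t m) :=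
            mul_le_mul_right hA _
        _ = (a * D) * ((K : ℝ≥0∞) * t m) := by ring
        _ ≤ (a * D) * E := mul_le_mul_right hB _
        _ = a * E * D := by ring
    have goal2 : (K : ℝ≥0∞) ≤ a / ((G m : ℕ) : ℝ≥0∞) * E * D := by
      have h3 : (K : ℝ≥0∞) ≤ a * E * D / ((G m : ℕ) : ℝ≥0∞) :=
        (ENNReal.le_div_iff_mul_le (Or.inl hG0) (Or.inl hGT)).2 hKG
      calc (K : ℝ≥0∞) ≤ a * E * D / ((G m : ℕ) : ℝ≥0∞) := h3
        _ = a / ((G m : ℕ) : ℝ≥0∞) * E * D := by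
            rw [div_eq_mul_inv, div_eq_mul_inv]; ring
    have hout : output A h eo α = S := rfl
    show FDP A H0 (output A h eo α) m ≤ a / ((G m : ℕ) : ℝ≥0∞) * E
    rw [hout, FDP]
    exact (ENNReal.div_le_iff_le_mul (Or.inl hD0) (Or.inl hDT)).2 goal2
  calc ∫⁻ ω, FDP A H0 (output A h (e ω) α) m ∂P
      ≤ ∫⁻ ω, (a / (G m : ℝ≥0∞)) * ∑ g ∈ nullGrp A H0 m, e ω m g ∂P :=
        lintegral_mono key
    _ = (a / (G m : ℝ≥0∞)) * ∫⁻ ω, ∑ g ∈ nullGrp A H0 m, e ω m g ∂P :=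
        lintegral_const_mul' _ _ (by
          simp only [ne_eq, ENNReal.div_eq_top]
          push_neg
          exact ⟨fun _ => hG0, fun hT => absurd hT haT⟩)
    _ = (a / (G m : ℝ≥0∞)) * ∑ g ∈ nullGrp A H0 m, ∫⁻ ω, e ω m g ∂P := by
        rw [lintegral_finset_sum _ (fun g _ => hmeas m g)]
    _ ≤ (a / (G m : ℝ≥0∞)) * (G m : ℝ≥0∞) := mul_le_mul_right (hrelax m) _
    _ = a := ENNReal.div_mul_cancel hG0 hGT

end MultilayerEFilter
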